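/- Define I(A) = A·ℕ^{m+2}, F_0(A) = C·ℕ^{m+1} − ℕ(1,0), F_d(A) = B·ℕ^{m+1} − ℕ(1,d), E_0(A) = F_0(A)\I(A), E_d(A) = F_d(A)\I(A), and E(A) = E_0(A) ∩ E_d(A). Then the set E(A) ⊂ ℤ² is finite. -/

import Mathlib

open Finset

/-- `I(A) = A·ℕ^{m+2}`, the semigroup generated by the columns `(1,k_j)`. -/
def Isg (m : ℕ) (k : Fin (m + 2) → ℕ) : Set (ℤ × ℤ) :=
  {α | ∃ u : Fin (m + 2) → ℕ,
    (∑ j, (u j : ℤ)) = α.1 ∧ (∑ j, (k j : ℤ) * u j) = α.2}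

/-- `F_0(A) = C·ℕ^{m+1} − ℕ(1,0)`, where `C` consists of the last `m+1`
columns of `A` (recall the first column is `(1, k_0) = (1,0)`). -/
def F0 (m : ℕ) (k : Fin (m + 2) → ℕ) : Set (ℤ × ℤ) :=
  {α | ∃ (u : Fin (m + 1) → ℕ) (r : ℕ),
    α.1 = (∑ j, (u j : ℤ)) - r ∧ α.2 = ∑ j, (k j.succ : ℤ) * u j}

/-- `F_d(A) = B·ℕ^{m+1} − ℕ(1,d)`, where `B` consists of the first `m+1`
columns of `A` and `d = k_{m+1}`. -/
def Fd (m : ℕ) (k : Fin (m + 2) → ℕ) : Set (ℤ × ℤ) :=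
  {α | ∃ (u : Fin (m + 1) → ℕ) (r : ℕ),
    α.1 = (∑ j, (u j : ℤ)) - r ∧
    α.2 = (∑ j, (k j.castSucc : ℤ) * u j) - r * (k (Fin.last (m + 1)) : ℤ)}

lemma mul_update {n : ℕ} (f h : Fin n → ℕ) (i : Fin n) (b : ℕ) :
    (fun j => f j * Function.update h i b j) = Function.update (fun j => f j * h j) i (f i * b) := by
  funext j
  rcases eq_or_ne j i with rfl | hj
  · simp
  · simp [Function.update_of_ne hj]

lemma swap_lemma (m d' : ℕ) (g : Fin (m + 1) → ℕ)
    (hlt : ∀ j, j ≠ Fin.last m → g j < d')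
    (hlast : g (Fin.last m) = d') :
    ∀ (N : ℕ) (v : Fin (m + 1) → ℕ), ∑ j, v j ≤ N →
      ∃ w : Fin (m + 1) → ℕ, (∑ j, g j * w j) = (∑ j, g j * v j) ∧
        ∀ j, j ≠ Fin.last m → w j < d' := by
  intro N
  induction N with
  | zero =>
    intro v hv
    refine ⟨v, rfl, fun j hj => ?_⟩
    have h1 : v j ≤ ∑ j, v j := Finset.single_le_sum (f := fun j => v j) (fun i _ => Nat.zero_le _)
      (Finset.mem_univ j)
    have h2 := hlt j hj
    omega
  | succ N ih =>
    intro v hv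
    by_cases hall : ∀ j, j ≠ Fin.last m → v j < d'
    · exact ⟨v, rfl, hall⟩
    · push_neg at hall
      obtain ⟨j₀, hj₀ne, hj₀big⟩ := hall
      have hbig : d' ≤ v j₀ := hj₀big
      set l := Fin.last m with hl
      set c : ℕ := v j₀ - d' with hc
      have hvj₀ : v j₀ = d' + c := by omega
      set v' : Fin (m + 1) → ℕ :=
        Function.update (Function.update v j₀ c) l (v l + g j₀) with hv'
      have hmem1 : j₀ ∈ (univ : Finset (Fin (m + 1))).erase l :=
        Finset.mem_erase.mpr ⟨hj₀ne, Finset.mem_univ _⟩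
      have hsum1 : ∀ (f : Fin (m+1) → ℕ),
          ∑ j, f j * v' j
            = f l * (v l + g j₀) + (f j₀ * c + ∑ j ∈ ((univ.erase l).erase j₀), f j * v j) := by
        intro f
        rw [hv', mul_update, Finset.sum_update_of_mem (Finset.mem_univ l)]
        simp only [← Finset.erase_eq]
        congr 1
        have : ∑ j ∈ (univ : Finset (Fin (m+1))).erase l, f j * Function.update v j₀ c j
            = ((univ : Finset (Fin (m+1))).erase l).sum
              (Function.update (fun j => f j * v j) j₀ (f j₀ * c)) := by
          rw [mul_update]
        rw [this, Finset.sum_update_of_mem hmem1]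
        simp [Finset.erase_eq]
      have hsplit : ∀ (f : Fin (m+1) → ℕ),
          ∑ j, f j * v j
            = f l * v l + (f j₀ * v j₀ + ∑ j ∈ ((univ.erase l).erase j₀), f j * v j) := by
        intro f
        rw [← Finset.add_sum_erase _ _ (Finset.mem_univ l),
          ← Finset.add_sum_erase _ _ hmem1]
      have hglt : g j₀ < d' := hlt j₀ hj₀ne
      have hcount : ∑ j, v' j ≤ N := by
        have h1 := hsum1 (fun _ => 1)
        have h2 := hsplit (fun _ => 1)
        simp only [one_mul] at h1 h2
        omega
      obtain ⟨w, hw1, hw2⟩ := ih v' hcount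
      refine ⟨w, ?_, hw2⟩
      rw [hw1, hsum1 g, hsplit g, hvj₀, hlast]
      ring

/-- If `s` has a representation with at most `n` summands, then `(n, s) ∈ I(A)`. -/
lemma mem_Isg_of_rep (m : ℕ) (k : Fin (m + 2) → ℕ) (h0 : k 0 = 0)
    (n : ℤ) (w : Fin (m + 1) → ℕ) (hw : (∑ j, (w j : ℤ)) ≤ n) :
    ((n, ∑ j, (k j.succ : ℤ) * w j) ∈ Isg m k) := by
  have hnn : (0 : ℤ) ≤ n - ∑ j, (w j : ℤ) := by
    have : (0:ℤ) ≤ ∑ j, (w j : ℤ) := Finset.sum_nonneg fun j _ => by positivity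
    linarith
  refine ⟨Fin.cons (n - ∑ j, (w j : ℤ)).toNat w, ?_, ?_⟩
  · rw [Fin.sum_univ_succ]
    simp only [Fin.cons_zero, Fin.cons_succ]
    rw [Int.toNat_of_nonneg hnn]
    ring
  · rw [Fin.sum_univ_succ]
    simp [h0]

set_option maxHeartbeats 1000000 in
/-- with `E_0(A) = F_0(A)\I(A)`, `E_d(A) = F_d(A)\I(A)` and
`E(A) = E_0(A) ∩ E_d(A)`, the set `E(A) ⊂ ℤ²` is finite. -/
theorem E_finite
    (m : ℕ) (k : Fin (m + 2) → ℕ)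
    (hmono : StrictMono k) (h0 : k 0 = 0)
    (hgcd : Finset.univ.gcd k = 1) :
    Set.Finite ((F0 m k \ Isg m k) ∩ (Fd m k \ Isg m k)) := by
  classical
  set d : ℕ := k (Fin.last (m + 1)) with hdd
  apply Set.Finite.subset
    ((Set.finite_Icc (1:ℤ) ((m:ℤ)*d*d)).prod (Set.finite_Icc (0:ℤ) ((d:ℤ)*((m:ℤ)*d*d))))
  rintro ⟨n, s⟩ ⟨⟨hF0, hnI⟩, hFd, _⟩
  obtain ⟨v, r0, hn0, hs0⟩ := hF0
  obtain ⟨u, r, hn, hs⟩ := hFd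
  simp only at hn hs hn0 hs0
  -- basic facts
  have hklt : ∀ j : Fin (m+1), k j.castSucc < d := fun j => hmono (Fin.castSucc_lt_last j)
  have hkpos : ∀ j : Fin (m+1), 1 ≤ k j.succ := fun j => by
    have := hmono (Fin.succ_pos j)
    omega
  have hd1 : 1 ≤ d := by
    have := hklt 0
    omega
  -- `r ≥ 1`, else `(n, s) ∈ I(A)`
  have hr : 1 ≤ r := by
    rcases Nat.eq_zero_or_pos r with h | h
    · exfalso
      apply hnI
      subst h
      refine ⟨Fin.snoc u 0, ?_, ?_⟩
      · rw [Fin.sum_univ_castSucc]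
        simp only [Fin.snoc_castSucc, Fin.snoc_last]
        rw [hn]; push_cast; ring
      · rw [Fin.sum_univ_castSucc]
        simp only [Fin.snoc_castSucc, Fin.snoc_last]
        rw [hs]; push_cast; ring
    · exact h
  -- key inequality : `s ≤ d*n - n - 1`
  have hsum_ge : (∑ j, (u j : ℤ)) ≤ ∑ j, ((d:ℤ) - k j.castSucc) * u j := by
    apply Finset.sum_le_sum
    intro j _
    have h1 : (1:ℤ) ≤ (d:ℤ) - k j.castSucc := by
      have := hklt j
      push_cast
      omega
    have h2 : (0:ℤ) ≤ (u j : ℤ) := by positivity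
    nlinarith
  have hexp : (∑ j, ((d:ℤ) - k j.castSucc) * u j)
      = (d:ℤ) * (∑ j, (u j : ℤ)) - ∑ j, (k j.castSucc : ℤ) * u j := by
    rw [Finset.mul_sum, ← Finset.sum_sub_distrib]
    exact Finset.sum_congr rfl fun j _ => by ring
  have hkey : s ≤ (d:ℤ) * n - n - 1 := by
    have hru : (1:ℤ) ≤ (r:ℤ) := by exact_mod_cast hr
    rw [hn, hs] at *
    rw [hexp] at hsum_ge
    linarith
  -- `s` as a natural number, via its `F0` representation
  set g : Fin (m+1) → ℕ := fun j => k j.succ with hg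
  have hsn : s = ((∑ j, g j * v j : ℕ) : ℤ) := by
    rw [hs0]; push_cast; rfl
  have hs_nonneg : (0:ℤ) ≤ s := by rw [hsn]; positivity
  -- apply the swap lemma to get an economical representation
  obtain ⟨w, hw1, hw2⟩ := swap_lemma m d g
    (fun j hj => by
      have hjlt : j < Fin.last m := (Fin.le_last j).lt_of_ne hj
      have : j.succ < (Fin.last m).succ := Fin.succ_lt_succ_iff.mpr hjlt
      rw [Fin.succ_last] at this
      exact hmono this)
    (by rw [hg]; simp only [Fin.succ_last]; rfl)
    (∑ j, v j) v le_rfl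
  have hwlast : d * w (Fin.last m) ≤ ∑ j, g j * w j := by
    have := Finset.single_le_sum (f := fun j => g j * w j)
      (fun i _ => Nat.zero_le _) (Finset.mem_univ (Fin.last m))
    have hgl : g (Fin.last m) = d := by rw [hg]; simp only [Fin.succ_last]; rfl
    have h' : g (Fin.last m) * w (Fin.last m) ≤ ∑ j, g j * w j := by simpa using this
    rw [hgl] at h'
    exact h'
  have hwrest : ∑ j ∈ (univ : Finset (Fin (m+1))).erase (Fin.last m), w j ≤ m * (d - 1) := by
    have hcard : ((univ : Finset (Fin (m+1))).erase (Fin.last m)).card = m := by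
      rw [Finset.card_erase_of_mem (Finset.mem_univ _)]
      simp
    calc ∑ j ∈ (univ : Finset (Fin (m+1))).erase (Fin.last m), w j
        ≤ ∑ _j ∈ (univ : Finset (Fin (m+1))).erase (Fin.last m), (d - 1) := by
          apply Finset.sum_le_sum
          intro j hj
          have := hw2 j (Finset.mem_erase.mp hj).1
          omega
      _ = m * (d - 1) := by rw [Finset.sum_const, hcard, smul_eq_mul]
  have hwsum : ∑ j, w j
      = w (Fin.last m) + ∑ j ∈ (univ : Finset (Fin (m+1))).erase (Fin.last m), w j :=
    (Finset.add_sum_erase _ _ (Finset.mem_univ _)).symm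
  have hdw : d * (∑ j, w j) ≤ (∑ j, g j * w j) + d * (m * (d - 1)) := by
    rw [hwsum, Nat.mul_add]
    have h1 : d * ∑ j ∈ (univ : Finset (Fin (m+1))).erase (Fin.last m), w j
        ≤ d * (m * (d-1)) := Nat.mul_le_mul_left d hwrest
    omega
  have hswv : s = ((∑ j, g j * w j : ℕ) : ℤ) := by rw [hsn, hw1]
  -- n is bounded above
  have hnub : n ≤ (m:ℤ) * d * d := by
    by_contra hbig
    push_neg at hbig
    apply hnI
    have hsum_w_le : (∑ j, (w j : ℤ)) ≤ n := by
      have hdwz : (d:ℤ) * (∑ j, (w j : ℤ)) ≤ s + (d:ℤ) * ((m:ℤ) * ((d:ℤ) - 1)) := by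
        have := hdw
        have hcast : ((d * ∑ j, w j : ℕ) : ℤ) ≤ (((∑ j, g j * w j) + d * (m * (d - 1)) : ℕ) : ℤ) := by
          exact_mod_cast this
        push_cast [Nat.cast_sub hd1] at hcast
        rw [hswv]
        push_cast
        linarith
      have hd0 : (0:ℤ) < (d:ℤ) := by exact_mod_cast hd1
      have : (d:ℤ) * (∑ j, (w j : ℤ)) ≤ (d:ℤ) * n := by nlinarith
      exact le_of_mul_le_mul_left this hd0
    have := mem_Isg_of_rep m k h0 n w hsum_w_le
    have hsw : s = ∑ j, (k j.succ : ℤ) * w j := by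
      rw [hswv]; push_cast; rfl
    rw [← hsw] at this
    exact this
  -- n is bounded below
  have hnlb : 1 ≤ n := by
    by_contra hsmall
    push_neg at hsmall
    have hn0' : n ≤ 0 := by omega
    have hdn : ((d:ℤ) - 1) * n ≤ 0 :=
      mul_nonpos_of_nonneg_of_nonpos
        (by have : (1:ℤ) ≤ (d:ℤ) := by exact_mod_cast hd1
            linarith) hn0'
    have hid : ((d:ℤ) - 1) * n = (d:ℤ) * n - n := by ring
    linarith
  have hd0' : (0:ℤ) ≤ (d:ℤ) := by positivity
  have hdn2 : (d:ℤ) * n ≤ (d:ℤ) * ((m:ℤ)*d*d) := mul_le_mul_of_nonneg_left hnub hd0'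
  have hsub : s ≤ (d:ℤ) * ((m:ℤ)*d*d) := by linarith
  exact Set.mem_prod.mpr ⟨⟨hnlb, hnub⟩, ⟨hs_nonneg, hsub⟩⟩
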